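/- Let k be a field of characteristic 0, G a group of bijections of kⁿ admitting a semidirect product decomposition G = M ⋊ L with L ⊆ GL_n(k), and suppose every element of M is a polynomial (or at least affine-combination-compatible) map such that for every finite sequence m₁,…,m_r ∈ M the average (1/r)∑ᵢ mᵢ (pointwise average of maps kⁿ → kⁿ) again lies in M. Then every finite subgroup F of G is conjugate by an element of M to a subgroup of L. -/

import Mathlib

/-- linearization criterion: let `k` have characteristic `0`,
and let `G = M ⋊ L` be a group of bijections of `kⁿ` with `L` consisting of
linear maps and `M` stable under taking (pointwise) averages of finite
sequences of its elements.  Then every finite subgroup `F ≤ G` is conjugate by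
an element of `M` to a subgroup of `L`. -/
theorem finite_subgroup_linearizable (n : ℕ) (k : Type*) [Field k] [CharZero k]
    (G M L : Subgroup (Equiv.Perm (Fin n → k)))
    (hMG : M ≤ G) (hLG : L ≤ G)
    (hLlin : ∀ g ∈ L, IsLinearMap k (⇑g))
    (hnorm : ∀ g ∈ G, ∀ m ∈ M, g * m * g⁻¹ ∈ M)
    (hint : M ⊓ L = ⊥)
    (hprod : ∀ g ∈ G, ∃ m ∈ M, ∃ l ∈ L, g = m * l)
    (havg : ∀ r : ℕ, 0 < r → ∀ ms : Fin r → Equiv.Perm (Fin n → k),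
      (∀ i, ms i ∈ M) →
        ∃ m' ∈ M, ∀ x : Fin n → k, m' x = (r : k)⁻¹ • ∑ i, ms i x)
    (F : Subgroup (Equiv.Perm (Fin n → k))) (hFG : F ≤ G)
    (hF : (F : Set (Equiv.Perm (Fin n → k))).Finite) :
    ∃ φ ∈ M, ∀ f ∈ F, φ * f * φ⁻¹ ∈ L := by
  classical
  -- choose a decomposition g = m * l for every g ∈ G
  have hdec : ∀ g : Equiv.Perm (Fin n → k),
      ∃ pr : Equiv.Perm (Fin n → k) × Equiv.Perm (Fin n → k),
      g ∈ G → pr.1 ∈ M ∧ pr.2 ∈ L ∧ g = pr.1 * pr.2 := by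
    intro g
    by_cases hg : g ∈ G
    · obtain ⟨m, hm, l, hl, h⟩ := hprod g hg
      exact ⟨(m, l), fun _ => ⟨hm, hl, h⟩⟩
    · exact ⟨(1, 1), fun h => absurd h hg⟩
  choose pr hpr using hdec
  set mfn : Equiv.Perm (Fin n → k) → Equiv.Perm (Fin n → k) := fun g => (pr g).1 with hmfn
  set lfn : Equiv.Perm (Fin n → k) → Equiv.Perm (Fin n → k) := fun g => (pr g).2 with hlfn
  have hmem : ∀ g ∈ G, mfn g ∈ M ∧ lfn g ∈ L ∧ g = mfn g * lfn g := fun g hg => hpr g hg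
  -- uniqueness of the L-part
  have huniq : ∀ m₁ ∈ M, ∀ l₁ ∈ L, ∀ m₂ ∈ M, ∀ l₂ ∈ L,
      m₁ * l₁ = m₂ * l₂ → l₁ = l₂ := by
    intro m₁ hm₁ l₁ hl₁ m₂ hm₂ l₂ hl₂ h
    have key : m₂⁻¹ * m₁ = l₂ * l₁⁻¹ := by
      have h1 : m₁ = m₂ * l₂ * l₁⁻¹ := by rw [← h]; group
      rw [h1]; group
    have hMemb : l₂ * l₁⁻¹ ∈ M ⊓ L :=
      ⟨key ▸ M.mul_mem (M.inv_mem hm₂) hm₁, L.mul_mem hl₂ (L.inv_mem hl₁)⟩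
    rw [hint, Subgroup.mem_bot] at hMemb
    exact (mul_inv_eq_one.mp hMemb).symm
  -- the map g ↦ lfn g is multiplicative on G
  have hhom : ∀ g ∈ G, ∀ h ∈ G, lfn (g * h) = lfn g * lfn h := by
    intro g hg h hh
    obtain ⟨hmg, hlg, hgd⟩ := hmem g hg
    obtain ⟨hmh, hlh, hhd⟩ := hmem h hh
    obtain ⟨hmgh, hlgh, hghd⟩ := hmem _ (G.mul_mem hg hh)
    have hM' : mfn g * (lfn g * mfn h * (lfn g)⁻¹) ∈ M :=
      M.mul_mem hmg (hnorm _ (hLG hlg) _ hmh)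
    have heq : (mfn g * (lfn g * mfn h * (lfn g)⁻¹)) * (lfn g * lfn h)
        = mfn (g * h) * lfn (g * h) := by
      rw [← hghd]
      calc (mfn g * (lfn g * mfn h * (lfn g)⁻¹)) * (lfn g * lfn h)
          = (mfn g * lfn g) * (mfn h * lfn h) := by group
        _ = g * h := by rw [← hgd, ← hhd]
    exact (huniq _ hM' _ (L.mul_mem hlg hlh) _ hmgh _ hlgh heq).symm
  -- each (lfn f)⁻¹ * f lies in M
  have hMmem : ∀ f ∈ G, (lfn f)⁻¹ * f ∈ M := by
    intro f hf
    obtain ⟨hmf, hlf, hfd⟩ := hmem f hf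
    have h1 : (lfn f)⁻¹ * f = (lfn f)⁻¹ * mfn f * ((lfn f)⁻¹)⁻¹ := by
      calc (lfn f)⁻¹ * f = (lfn f)⁻¹ * (mfn f * lfn f) := by rw [← hfd]
        _ = (lfn f)⁻¹ * mfn f * ((lfn f)⁻¹)⁻¹ := by group
    rw [h1]
    exact hnorm _ (G.inv_mem (hLG hlf)) _ hmf
  -- enumerate F
  set Fs : Finset (Equiv.Perm (Fin n → k)) := hF.toFinset with hFs
  have hmemFs : ∀ f, f ∈ Fs ↔ f ∈ F := fun f => hF.mem_toFinset
  have h1F : (1 : Equiv.Perm (Fin n → k)) ∈ Fs := (hmemFs 1).mpr F.one_mem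
  have hrpos : 0 < Fs.card := Finset.card_pos.mpr ⟨1, h1F⟩
  set e := Fs.equivFin with he
  obtain ⟨φ, hφM, hφ⟩ := havg Fs.card hrpos
    (fun i => (lfn (e.symm i : Equiv.Perm (Fin n → k)))⁻¹ * (e.symm i : Equiv.Perm (Fin n → k)))
    (fun i => hMmem _ (hFG ((hmemFs _).mp (e.symm i).2)))
  have hφ' : ∀ x : Fin n → k,
      φ x = (Fs.card : k)⁻¹ • ∑ f ∈ Fs, (lfn f)⁻¹ (f x) := by
    intro x
    rw [hφ x]
    congr 1
    rw [← Finset.sum_coe_sort Fs (fun f => (lfn f)⁻¹ (f x))]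
    rw [← Equiv.sum_comp e.symm (fun f : Fs => (lfn (f : Equiv.Perm (Fin n → k)))⁻¹ ((f : Equiv.Perm (Fin n → k)) x))]
    simp [Equiv.Perm.mul_apply]
  refine ⟨φ, hφM, ?_⟩
  intro f' hf'
  obtain ⟨hmf', hlf', hdf'⟩ := hmem f' (hFG hf')
  have hlin := hLlin _ hlf'
  have hcomm : φ * f' = lfn f' * φ := by
    refine Equiv.ext fun x => ?_
    simp only [Equiv.Perm.mul_apply]
    rw [hφ' (f' x), hφ' x]
    have h1 : ∀ y : Fin n → k, lfn f' y = (IsLinearMap.mk' _ hlin) y := fun y => rfl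
    rw [h1, map_smul, map_sum]
    congr 1
    refine Finset.sum_bij' (fun f _ => f * f') (fun g _ => g * f'⁻¹) ?_ ?_ ?_ ?_ ?_
    · intro a ha
      exact (hmemFs _).mpr (F.mul_mem ((hmemFs _).mp ha) hf')
    · intro a ha
      exact (hmemFs _).mpr (F.mul_mem ((hmemFs _).mp ha) (F.inv_mem hf'))
    · intro a ha; group
    · intro a ha; group
    · intro f hf
      have hfF : f ∈ G := hFG ((hmemFs _).mp hf)
      have hmul := hhom f hfF f' (hFG hf')
      simp only [← h1, hmul, mul_inv_rev, Equiv.Perm.mul_apply]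
      exact (Equiv.apply_symm_apply _ _).symm
  have hfinal : φ * f' * φ⁻¹ = lfn f' := by rw [hcomm]; group
  rw [hfinal]
  exact hlf'
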